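/- If a linear semi-bar 0-visibility representation R with distinct lengths on bars 1, …, n is curled into a cylindrical representation R′, then the visibility graphs of R and R′ coincide if and only if bars 1 and n (the bottom and top bars) are the two longest bars of R. -/

import Mathlib

open Finset
open scoped Classical

variable {n : ℕ}

/-- In a linear semi-bar representation (bars `0, …, n-1` from bottom to top), the number of
bars strictly between `i` and `j` that are longer than the shorter of the two. -/
noncomputable def btwCount (ℓ : Fin n → ℝ) (i j : Fin n) : ℕ :=
  (univ.filter fun t => min i j < t ∧ t < max i j ∧ min (ℓ i) (ℓ j) < ℓ t).card

/-- Linear semi-bar `k`-visibility adjacency. -/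
noncomputable def LinAdj (k : ℕ) (ℓ : Fin n → ℝ) (i j : Fin n) : Prop :=
  i ≠ j ∧ btwCount ℓ i j ≤ k

/-- The open cyclic arc from `i` to `j` after curling bars `0, …, n-1` onto a cylinder. -/
def cycArc (i j : Fin n) : Finset (Fin n) :=
  univ.filter fun t => if i < j then (i < t ∧ t < j) else (i < t ∨ t < j)

noncomputable def cycCount (ℓ : Fin n → ℝ) (i j : Fin n) : ℕ :=
  ((cycArc i j).filter fun t => min (ℓ i) (ℓ j) < ℓ t).card

/-- Cylindrical semi-bar `k`-visibility adjacency on the curled representation. -/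
noncomputable def CylAdjF (k : ℕ) (ℓ : Fin n → ℝ) (i j : Fin n) : Prop :=
  i ≠ j ∧ (cycCount ℓ i j ≤ k ∨ cycCount ℓ j i ≤ k)

lemma btw_zero (ℓ : Fin n → ℝ) (i j : Fin n) :
    btwCount ℓ i j ≤ 0 ↔
      ∀ t : Fin n, min i j < t → t < max i j → ℓ t ≤ min (ℓ i) (ℓ j) := by
  simp [btwCount, Nat.le_zero, Finset.card_eq_zero, Finset.filter_eq_empty_iff, not_lt]

lemma cyc_zero (ℓ : Fin n → ℝ) (i j : Fin n) :
    cycCount ℓ i j ≤ 0 ↔ ∀ t ∈ cycArc i j, ℓ t ≤ min (ℓ i) (ℓ j) := by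
  simp [cycCount, Nat.le_zero, Finset.card_eq_zero, Finset.filter_eq_empty_iff, not_lt]

lemma mem_cycArc {i j t : Fin n} :
    t ∈ cycArc i j ↔ (if i < j then (i < t ∧ t < j) else (i < t ∨ t < j)) := by
  simp [cycArc]

lemma btw_comm (ℓ : Fin n → ℝ) (i j : Fin n) : btwCount ℓ i j = btwCount ℓ j i := by
  unfold btwCount
  congr 1
  ext t
  simp [min_comm i j, max_comm i j, min_comm (ℓ i) (ℓ j)]

lemma cyc_eq_btw (ℓ : Fin n → ℝ) {i j : Fin n} (hij : i < j) :
    cycCount ℓ i j = btwCount ℓ i j := by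
  unfold cycCount btwCount cycArc
  rw [Finset.filter_filter]
  congr 1
  ext t
  simp only [if_pos hij, min_eq_left hij.le, max_eq_right hij.le, and_assoc]

lemma wrap_lemma (hn : 2 ≤ n) (ℓ : Fin n → ℝ)
    (h : ∀ t : Fin n, t ≠ ⟨0, (lt_of_lt_of_le Nat.zero_lt_two hn)⟩ → t ≠ ⟨n - 1, (Nat.sub_lt (lt_of_lt_of_le Nat.zero_lt_two hn) Nat.one_pos)⟩ →
        ℓ t < ℓ ⟨0, (lt_of_lt_of_le Nat.zero_lt_two hn)⟩ ∧ ℓ t < ℓ ⟨n - 1, (Nat.sub_lt (lt_of_lt_of_le Nat.zero_lt_two hn) Nat.one_pos)⟩)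
    {i j : Fin n} (hij : i < j) (h0 : cycCount ℓ j i ≤ 0) :
    i = (⟨0, (lt_of_lt_of_le Nat.zero_lt_two hn)⟩ : Fin n) ∧ j = (⟨n - 1, (Nat.sub_lt (lt_of_lt_of_le Nat.zero_lt_two hn) Nat.one_pos)⟩ : Fin n) := by
  set a : Fin n := ⟨0, (lt_of_lt_of_le Nat.zero_lt_two hn)⟩ with ha
  set b : Fin n := ⟨n - 1, (Nat.sub_lt (lt_of_lt_of_le Nat.zero_lt_two hn) Nat.one_pos)⟩ with hb
  have hmem := (cyc_zero ℓ j i).mp h0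
  have hnot : ¬ j < i := not_lt.mpr hij.le
  by_contra hc
  rcases not_and_or.mp hc with hi | hj
  · have hai : a < i := by
      rw [Fin.lt_def]
      have : i.val ≠ 0 := fun hh => hi (Fin.ext hh)
      simpa [ha] using Nat.pos_of_ne_zero this
    have hmem_a : a ∈ cycArc j i := by
      rw [mem_cycArc, if_neg hnot]; exact Or.inr hai
    have h1 := hmem a hmem_a
    have hib : i ≠ b := by
      intro hh
      have h1 : i.val < j.val := hij
      have h2 : j.val < n := j.isLt
      have h3 : i.val = n - 1 := by rw [hh]
      omega
    have h2 := (h i (fun hh => hi hh) hib).1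
    have := h1.trans (min_le_right _ _)
    linarith
  · have hjb : j < b := by
      rw [Fin.lt_def]
      have h1 : j.val ≠ n - 1 := fun hh => hj (Fin.ext hh)
      have h2 : j.val < n := j.isLt
      simp only [hb]; omega
    have hmem_b : b ∈ cycArc j i := by
      rw [mem_cycArc, if_neg hnot]; exact Or.inl hjb
    have h1 := hmem b hmem_b
    have hja : j ≠ a := by
      intro hh
      rw [hh] at hij
      exact absurd (Fin.lt_def.mp hij) (by simp [ha])
    have h2 := (h j hja (fun hh => hj hh)).2
    have := h1.trans (min_le_left _ _)
    linarith

lemma btw_ab_zero (hn : 2 ≤ n) (ℓ : Fin n → ℝ)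
    (h : ∀ t : Fin n, t ≠ ⟨0, (lt_of_lt_of_le Nat.zero_lt_two hn)⟩ → t ≠ ⟨n - 1, (Nat.sub_lt (lt_of_lt_of_le Nat.zero_lt_two hn) Nat.one_pos)⟩ →
        ℓ t < ℓ ⟨0, (lt_of_lt_of_le Nat.zero_lt_two hn)⟩ ∧ ℓ t < ℓ ⟨n - 1, (Nat.sub_lt (lt_of_lt_of_le Nat.zero_lt_two hn) Nat.one_pos)⟩) :
    btwCount ℓ (⟨0, (lt_of_lt_of_le Nat.zero_lt_two hn)⟩ : Fin n) (⟨n - 1, (Nat.sub_lt (lt_of_lt_of_le Nat.zero_lt_two hn) Nat.one_pos)⟩ : Fin n) ≤ 0 := by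
  set a : Fin n := ⟨0, (lt_of_lt_of_le Nat.zero_lt_two hn)⟩ with ha
  set b : Fin n := ⟨n - 1, (Nat.sub_lt (lt_of_lt_of_le Nat.zero_lt_two hn) Nat.one_pos)⟩ with hb
  have hab : a ≤ b := by simp [ha, hb, Fin.le_def]
  rw [btw_zero]
  intro t h1 h2
  rw [min_eq_left hab] at h1
  rw [max_eq_right hab] at h2
  have hta : t ≠ a := by
    intro hh; rw [hh] at h1; exact lt_irrefl _ h1
  have htb : t ≠ b := by
    intro hh; rw [hh] at h2; exact lt_irrefl _ h2
  have := h t hta htb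
  exact le_min this.1.le this.2.le

/-- curling a linear semi-bar `0`-visibility representation with distinct
lengths (`n ≥ 2`) into a cylinder preserves the visibility graph iff the bottom bar and the
top bar are the two longest bars. -/
theorem stmt18 (hn : 2 ≤ n) (ℓ : Fin n → ℝ) (hinj : Function.Injective ℓ) :
    (∀ i j : Fin n, LinAdj 0 ℓ i j ↔ CylAdjF 0 ℓ i j) ↔
      (∀ t : Fin n, t ≠ ⟨0, by omega⟩ → t ≠ ⟨n - 1, by omega⟩ →
        ℓ t < ℓ ⟨0, by omega⟩ ∧ ℓ t < ℓ ⟨n - 1, by omega⟩) := by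
  set a : Fin n := ⟨0, by omega⟩ with ha
  set b : Fin n := ⟨n - 1, by omega⟩ with hb
  constructor
  · intro h t ht0 htb
    have hab : a ≠ b := by
      intro hh
      have := Fin.mk.injEq 0 (by omega : 0 < n) (n - 1) (by omega) ▸ hh
      simp [ha, hb, Fin.ext_iff] at hh
      omega
    have hwrap : cycCount ℓ b a ≤ 0 := by
      rw [cyc_zero]
      intro t ht
      rw [mem_cycArc] at ht
      have hnba : ¬ b < a := by simp [Fin.lt_def, ha, hb]
      rw [if_neg hnba] at ht
      rcases ht with h1 | h1
      · exact absurd (Fin.lt_def.mp h1) (by have := t.isLt; simp [hb]; omega)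
      · exact absurd (Fin.lt_def.mp h1) (by simp [ha])
    have hlin := (h a b).mpr ⟨hab, Or.inr hwrap⟩
    have hle : a ≤ b := by simp [ha, hb, Fin.le_def]
    have ht' := (btw_zero ℓ a b).mp hlin.2 t
      (by rw [min_eq_left hle, Fin.lt_def]
          have : t.val ≠ 0 := fun hh => ht0 (Fin.ext hh)
          simpa [ha] using Nat.pos_of_ne_zero this)
      (by rw [max_eq_right hle, Fin.lt_def]
          have h1 : t.val ≠ n - 1 := fun hh => htb (Fin.ext hh)
          have h2 : t.val < n := t.isLt
          simp only [hb]; omega)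
    have h1 : ℓ t ≠ ℓ a := fun hh => ht0 (hinj hh)
    have h2 : ℓ t ≠ ℓ b := fun hh => htb (hinj hh)
    exact ⟨lt_of_le_of_ne (ht'.trans (min_le_left _ _)) h1,
           lt_of_le_of_ne (ht'.trans (min_le_right _ _)) h2⟩
  · intro h i j
    constructor
    · rintro ⟨hne, hcnt⟩
      refine ⟨hne, ?_⟩
      rcases lt_or_gt_of_ne hne with hij | hji
      · left; rw [cyc_eq_btw ℓ hij]; exact hcnt
      · right; rw [cyc_eq_btw ℓ hji, ← btw_comm]; exact hcnt
    · rintro ⟨hne, hor⟩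
      refine ⟨hne, ?_⟩
      rcases lt_or_gt_of_ne hne with hij | hji
      · rcases hor with h0 | h0
        · rw [cyc_eq_btw ℓ hij] at h0; exact h0
        · obtain ⟨hia, hjb⟩ := wrap_lemma hn ℓ h hij h0
          rw [hia, hjb]
          exact btw_ab_zero hn ℓ h
      · rcases hor with h0 | h0
        · obtain ⟨hja, hib⟩ := wrap_lemma hn ℓ h hji h0
          rw [hja, hib, btw_comm]
          exact btw_ab_zero hn ℓ h
        · rw [cyc_eq_btw ℓ hji, ← btw_comm] at h0; exact h0
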